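/- A linear profile θ*(z) = c·π·z + b with c = n + 1/4 (n ∈ ℤ) satisfies the weak anchoring boundary conditions B·θ*'(1) = -sin(2θ*(1)) and B·θ*'(-1) = sin(2θ*(-1)) if and only if cos(2b) = -B·(n+1/4)·π; such solutions exist only if B·(n+1/4)·π ≤ 1, and in particular Type III solutions with n = 0 exist only when B ≤ 4/π. -/

import Mathlib

open Real

theorem stmt_7 (B : ℝ) (hB : 0 < B) (n : ℤ) (b : ℝ) :
    let θ : ℝ → ℝ := fun z => ((n : ℝ) + 1 / 4) * π * z + b
    ((B * deriv θ 1 = -Real.sin (2 * θ 1) ∧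
        B * deriv θ (-1) = Real.sin (2 * θ (-1))) ↔
      Real.cos (2 * b) = -(B * ((n : ℝ) + 1 / 4) * π)) ∧
    (Real.cos (2 * b) = -(B * ((n : ℝ) + 1 / 4) * π) →
      B * ((n : ℝ) + 1 / 4) * π ≤ 1) ∧
    (n = 0 → Real.cos (2 * b) = -(B * ((n : ℝ) + 1 / 4) * π) →
      B ≤ 4 / π) := by
  intro θ
  set a : ℝ := ((n : ℝ) + 1 / 4) * π with ha
  have hderiv : ∀ x : ℝ, deriv θ x = a := by
    intro x
    have : HasDerivAt θ a x := by
      have h0 := ((hasDerivAt_id x).const_mul a).add_const b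
      rw [mul_one] at h0
      exact h0
    exact this.deriv
  have hθ1 : Real.sin (2 * θ 1) = Real.cos (2 * b) := by
    have : 2 * θ 1 = (2 * b + π / 2) + (n : ℝ) * (2 * π) := by
      simp only [θ, ha]; push_cast; ring
    rw [this, Real.sin_add_int_mul_two_pi, Real.sin_add_pi_div_two]
  have hθm1 : Real.sin (2 * θ (-1)) = -Real.cos (2 * b) := by
    have : 2 * θ (-1) = (2 * b - π / 2) + (-n : ℝ) * (2 * π) := by
      simp only [θ, ha]; push_cast; ring
    rw [this]
    have := Real.sin_add_int_mul_two_pi (2 * b - π / 2) (-n)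
    push_cast at this
    rw [this, Real.sin_sub_pi_div_two]
  refine ⟨?_, ?_, ?_⟩
  · rw [hderiv 1, hderiv (-1), hθ1, hθm1]
    have hBa : B * a = B * ((n : ℝ) + 1 / 4) * π := by rw [ha, mul_assoc]
    rw [hBa]
    constructor
    · rintro ⟨h1, _⟩; linarith
    · intro h; exact ⟨by linarith, by linarith⟩
  · intro h
    have := Real.neg_one_le_cos (2 * b)
    rw [h] at this
    linarith
  · intro hn h
    subst hn
    have := Real.neg_one_le_cos (2 * b)
    rw [h] at this
    rw [le_div_iff₀ Real.pi_pos]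
    nlinarith [Real.pi_pos]
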